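/- Let f : F_2^{2n} → ℝ≥0 satisfy the symplectic Fourier inversion identity f(z) = (1/2^n) Σ_{z'} (-1)^{[z,z']} f(z'), the normalization (1/2^n) Σ_z f(z) = 1, and Σ_α f(0,α) ≤ 3. Then Σ_α f(y,α) ≤ 3 for every y ∈ F_2^n. -/

import Mathlib

open Finset
open scoped Classical

abbrev BV (n : ℕ) := Fin n → ZMod 2
abbrev Pt (n : ℕ) := BV n × BV n

def dotp {n : ℕ} (x y : BV n) : ZMod 2 := ∑ i, x i * y i
def symp {n : ℕ} (z w : Pt n) : ZMod 2 := dotp z.1 w.2 + dotp w.1 z.2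
def sgn (b : ZMod 2) : ℝ := (-1 : ℝ) ^ b.val

lemma zmod2_cases : ∀ a : ZMod 2, a = 0 ∨ a = 1 := by decide

lemma sgn_zero : sgn (0 : ZMod 2) = 1 := rfl
lemma sgn_one : sgn (1 : ZMod 2) = -1 := by simp [sgn, show (1 : ZMod 2).val = 1 from rfl]

lemma sgn_add (a b : ZMod 2) : sgn (a + b) = sgn a * sgn b := by
  rcases zmod2_cases a with ha | ha <;> rcases zmod2_cases b with hb | hb <;>
    subst ha <;> subst hb <;>
    simp [sgn, show ((1 : ZMod 2) + 1) = 0 from rfl, show (1 : ZMod 2).val = 1 from rfl]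

lemma sgn_le_one (a : ZMod 2) : sgn a ≤ 1 := by
  rcases zmod2_cases a with h | h <;> subst h <;> simp [sgn_zero, sgn_one] <;> norm_num

lemma dotp_add_right {n : ℕ} (x a b : BV n) : dotp x (a + b) = dotp x a + dotp x b := by
  simp [dotp, mul_add, Finset.sum_add_distrib]

lemma dotp_single {n : ℕ} (x : BV n) (i0 : Fin n) :
    dotp x (Pi.single i0 (1 : ZMod 2)) = x i0 := by
  rw [dotp, Finset.sum_eq_single i0]
  · simp
  · intro j _ hj
    simp [Pi.single_apply, hj]
  · simp

lemma sum_sgn_dotp {n : ℕ} (x : BV n) :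
    ∑ α : BV n, sgn (dotp x α) = if x = 0 then (2 : ℝ) ^ n else 0 := by
  by_cases hx : x = 0
  · subst hx
    simp only [if_pos rfl]
    have : ∀ α : BV n, dotp (0 : BV n) α = 0 := by intro α; simp [dotp]
    simp only [this, sgn_zero, Finset.sum_const, Finset.card_univ]
    simp [Fintype.card_fun]
  · rw [if_neg hx]
    obtain ⟨i0, hi0⟩ : ∃ i0, x i0 ≠ 0 := by
      by_contra h
      push_neg at h
      exact hx (funext fun i => h i)
    have hx1 : x i0 = 1 := by
      rcases zmod2_cases (x i0) with h | h
      · exact absurd h hi0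
      · exact h
    set e : BV n := Pi.single i0 (1 : ZMod 2) with he
    have key : ∀ α : BV n, sgn (dotp x (α + e)) = - sgn (dotp x α) := by
      intro α
      rw [dotp_add_right, sgn_add, he, dotp_single, hx1, sgn_one]
      ring
    have hre : ∑ α : BV n, sgn (dotp x α) = ∑ α : BV n, sgn (dotp x (α + e)) :=
      (Fintype.sum_equiv (Equiv.addRight e) _ _ (fun α => rfl)).symm
    have hneg : ∑ α : BV n, sgn (dotp x (α + e)) = - ∑ α : BV n, sgn (dotp x α) := by
      simp [key]
    linarith [hre, hneg]

/-- If `f ≥ 0` satisfies the symplectic Fourier inversion identity, the normalization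
`(1/2^n) Σ f = 1`, and `Σ_α f(0,α) ≤ 3`, then `Σ_α f(y,α) ≤ 3` for every `y`. -/
theorem stmt18 (n : ℕ) (f : Pt n → ℝ) (hf : ∀ z, 0 ≤ f z)
    (hinv : ∀ z : Pt n, f z = (1 / 2 ^ n : ℝ) * ∑ z' : Pt n, sgn (symp z z') * f z')
    (hnorm : (1 / 2 ^ n : ℝ) * ∑ z : Pt n, f z = 1)
    (h0 : ∑ α : BV n, f (0, α) ≤ 3) :
    ∀ y : BV n, ∑ α : BV n, f (y, α) ≤ 3 := by
  intro y
  have key : ∑ α : BV n, f (y, α) = ∑ β : BV n, sgn (dotp y β) * f (0, β) := by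
    calc ∑ α : BV n, f (y, α)
        = ∑ α : BV n, (1 / 2 ^ n : ℝ) * ∑ z' : Pt n, sgn (symp (y, α) z') * f z' := by
          exact Finset.sum_congr rfl fun α _ => hinv (y, α)
      _ = (1 / 2 ^ n : ℝ) * ∑ z' : Pt n, (∑ α : BV n, sgn (symp (y, α) z')) * f z' := by
          rw [← Finset.mul_sum, Finset.sum_comm]
          congr 1
          exact Finset.sum_congr rfl fun z' _ => by rw [Finset.sum_mul]
      _ = (1 / 2 ^ n : ℝ) * ∑ z' : Pt n,
            (sgn (dotp y z'.2) * (if z'.1 = 0 then (2 : ℝ) ^ n else 0)) * f z' := by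
          congr 1
          refine Finset.sum_congr rfl fun z' _ => ?_
          congr 1
          have : ∀ α : BV n, symp (y, α) z' = dotp y z'.2 + dotp z'.1 α := fun α => rfl
          simp only [this, sgn_add, ← Finset.mul_sum, sum_sgn_dotp]
      _ = (1 / 2 ^ n : ℝ) * ∑ β : BV n, sgn (dotp y β) * (2 : ℝ) ^ n * f (0, β) := by
          rw [Fintype.sum_prod_type]
          rw [Finset.sum_eq_single (0 : BV n)]
          · simp
          · intro x _ hx
            simp [hx]
          · simp
      _ = ∑ β : BV n, sgn (dotp y β) * f (0, β) := by
          rw [Finset.mul_sum]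
          refine Finset.sum_congr rfl fun β _ => ?_
          have h2 : (2 : ℝ) ^ n ≠ 0 := by positivity
          field_simp
  rw [key]
  calc ∑ β : BV n, sgn (dotp y β) * f (0, β) ≤ ∑ β : BV n, f (0, β) := by
        refine Finset.sum_le_sum fun β _ => ?_
        have := sgn_le_one (dotp y β)
        nlinarith [hf ((0 : BV n), β)]
    _ ≤ 3 := h0
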